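/- Let ε′ be obtained from ε by removing ε_i (with ε′ homogeneous if n = 4), and let V, W be Ů(ε)-submodules of tensor powers of the natural module 𝒱. Then: (1) tr^ε_{ε′}(V), tr^ε_{ε′}(W), and tr^ε_{ε′}(V⊗W) are Ů(ε′)-modules via the folding homomorphism φ; (2) tr^ε_{ε′}(V⊗W) ≅ tr^ε_{ε′}(V) ⊗ tr^ε_{ε′}(W) as Ů(ε′)-modules. -/

import Mathlib

/-! Generalized quantum group of affine type A (Kwon–Yu), common definitions.

Conventions:
* The base field is `K = ℚ(q)` with `qq = q`.
* The index set `𝕀 = {1,…,n}` is modeled 0-based by `Fin n`: the position `p : Fin n`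
  represents the letter `p+1`; `ε : Fin n → Bool` with `ε p = true` meaning `ε_{p+1} = 1`.
* The affine index set `I = {0,1,…,n-1}` is modeled by `Fin n` (with cyclic arithmetic);
  for `i : Fin n`, the simple root is `α_i = δ_i - δ_{i+1}` (letters mod n), whose
  letters have 0-based positions `i - 1` and `i` (`Fin` subtraction is cyclic).
-/

set_option synthInstance.maxHeartbeats 1000000
set_option maxHeartbeats 1600000

noncomputable section
open scoped TensorProduct

abbrev K : Type := RatFunc ℚ

/-- The indeterminate `q`. -/
def qq : K := RatFunc.X

/-- `q_p = (-1)^{ε_p} q^{(-1)^{ε_p}}` for the letter at (0-based) position `p`. -/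
def qv {n : ℕ} (ε : Fin n → Bool) (p : Fin n) : K := if ε p then -qq⁻¹ else qq

/-- `(-1)^{ε_p}` as an integer. -/
def sgn {n : ℕ} (ε : Fin n → Bool) (p : Fin n) : ℤ := if ε p then -1 else 1

/-- `⟨α_i, δ_{p+1}^∨⟩`, where `i ∈ I` and `p` is a 0-based letter position. -/
def apair {n : ℕ} [NeZero n] (i p : Fin n) : ℤ :=
  (if p = i - 1 then 1 else 0) - (if p = i then 1 else 0)

/-- the exponent of `ω_{p+1} = q^{(-1)^{ε_{p+1}} δ_{p+1}^∨}` as an element of `P^∨ = ℤ^n`. -/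
def ωexp {n : ℕ} (ε : Fin n → Bool) (p : Fin n) : Fin n → ℤ :=
  fun r => if r = p then sgn ε p else 0

/-- the exponent of `k_i = ω_i ω_{i+1}^{-1}` in `P^∨`. -/
def κe {n : ℕ} [NeZero n] (ε : Fin n → Bool) (i : Fin n) : Fin n → ℤ :=
  ωexp ε (i - 1) - ωexp ε i

/-- `D_{ij} = q_i^{⟨α_j,δ_i^∨⟩} q_{i+1}^{-⟨α_j,δ_{i+1}^∨⟩}`. -/
def Dc {n : ℕ} [NeZero n] (ε : Fin n → Bool) (i j : Fin n) : K :=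
  qv ε (i - 1) ^ apair j (i - 1) * qv ε i ^ (-apair j i)

/-- `[2] = q + q⁻¹`. -/
def brk2 : K := qq + qq⁻¹

/-- `i ∈ I_odd`, i.e. `(α_i|α_i) = 0`, i.e. `ε_i ≠ ε_{i+1}`. -/
def oddI {n : ℕ} [NeZero n] (ε : Fin n → Bool) (i : Fin n) : Prop := ε (i - 1) ≠ ε i

/-- `(-1)^{ε_i}` for `i ∈ I`, as a scalar. -/
def signI {n : ℕ} [NeZero n] (ε : Fin n → Bool) (i : Fin n) : K := if ε (i - 1) then -1 else 1

/-- cyclic adjacency in the affine Dynkin diagram of `I = ℤ/n`. -/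
def adjI {n : ℕ} [NeZero n] (i j : Fin n) : Prop := j = i + 1 ∨ i = j + 1

/-! ### The natural module `𝒱` and its tensor powers, concretely.

`𝒱^{⊗ℓ}` is modeled as the space `Vl n ℓ = (Fin ℓ → Fin n) → K` of coefficient functions on
multi-indices; the basis vector `v_{m_0} ⊗ ⋯ ⊗ v_{m_{ℓ-1}}` is `Pi.single m 1`.  The action of
the generators of `Ů(ε)` (and of `U(ε)`) obtained from the comultiplication
`Δ(e_i) = e_i ⊗ 1 + k_i^{-1} ⊗ e_i`, `Δ(f_i) = f_i ⊗ k_i + 1 ⊗ f_i`, `Δ(q^h) = q^h ⊗ q^h`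
is written out explicitly below. -/

/-- A linear endomorphism of a coefficient space `M → K` given by
`g ↦ (m ↦ c₁ m * g m + c₂ m * g (σ m))`. -/
def twoTerm {M : Type} (c₁ c₂ : M → K) (σ : M → M) : Module.End K (M → K) where
  toFun g := fun m => c₁ m * g m + c₂ m * g (σ m)
  map_add' g h := by funext m; simp only [Pi.add_apply]; ring
  map_smul' a g := by
    funext m; simp only [Pi.smul_apply, smul_eq_mul, RingHom.id_apply]; ring

abbrev Vl (n ℓ : ℕ) : Type := (Fin ℓ → Fin n) → K

/-- diagonal entry of `k_i` at a letter position `p`. -/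
def kEntry {n : ℕ} [NeZero n] (ε : Fin n → Bool) (i p : Fin n) : K :=
  (if p = i - 1 then qv ε (i - 1) else 1) * (if p = i then (qv ε i)⁻¹ else 1)

/-- diagonal entry of `k_i^{-1}` at a letter position `p`. -/
def kinvEntry {n : ℕ} [NeZero n] (ε : Fin n → Bool) (i p : Fin n) : K :=
  (if p = i - 1 then (qv ε (i - 1))⁻¹ else 1) * (if p = i then qv ε i else 1)

/-- diagonal entry of `q^h` at a letter position `p` (recall `ω_p = q^{(-1)^{ε_p} δ_p^∨}`
acts on `v_p` by `q_p`). -/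
def qhEntry {n : ℕ} (ε : Fin n → Bool) (h : Fin n → ℤ) (p : Fin n) : K :=
  qv ε p ^ (sgn ε p * h p)

/-- the action of `e_i` on `𝒱^{⊗ℓ}` via `Δ`. -/
def eOpL (n ℓ : ℕ) [NeZero n] (ε : Fin n → Bool) (i : Fin n) : Module.End K (Vl n ℓ) :=
  ∑ t : Fin ℓ, twoTerm 0
    (fun m => if m t = i - 1 then ∏ s ∈ Finset.univ.filter (fun s => s < t), kinvEntry ε i (m s) else 0)
    (fun m => Function.update m t i)

/-- the action of `f_i` on `𝒱^{⊗ℓ}` via `Δ`. -/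
def fOpL (n ℓ : ℕ) [NeZero n] (ε : Fin n → Bool) (i : Fin n) : Module.End K (Vl n ℓ) :=
  ∑ t : Fin ℓ, twoTerm 0
    (fun m => if m t = i then ∏ s ∈ Finset.univ.filter (fun s => t < s), kEntry ε i (m s) else 0)
    (fun m => Function.update m t (i - 1))

/-- the action of `q^h` on `𝒱^{⊗ℓ}` via `Δ`. -/
def qhOpL (n ℓ : ℕ) (ε : Fin n → Bool) (h : Fin n → ℤ) : Module.End K (Vl n ℓ) :=
  twoTerm (fun m => ∏ t : Fin ℓ, qhEntry ε h (m t)) 0 id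

/-- The `R` matrix of (3.1) acting on the tensor factors `t, t+1` of `𝒱^{⊗ℓ}`:
`R(v_i ⊗ v_j) = q⁻¹ q_i⁻¹ v_i ⊗ v_j` (`i = j`), `q⁻¹ v_j ⊗ v_i` (`i > j`),
`(q⁻² − 1) v_i ⊗ v_j + q⁻¹ v_j ⊗ v_i` (`i < j`). -/
def Rsite (n ℓ : ℕ) [NeZero n] (ε : Fin n → Bool) (t : Fin (ℓ - 1)) :
    Module.End K (Vl n ℓ) :=
  have h1 : (t : ℕ) + 1 < ℓ := by have := t.isLt; omega
  have h0 : (t : ℕ) < ℓ := by omega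
  twoTerm
    (fun m => if m ⟨t, h0⟩ = m ⟨t + 1, h1⟩ then qq⁻¹ * (qv ε (m ⟨t, h0⟩))⁻¹
      else if m ⟨t, h0⟩ < m ⟨t + 1, h1⟩ then qq⁻¹ * qq⁻¹ - 1 else 0)
    (fun m => if m ⟨t, h0⟩ = m ⟨t + 1, h1⟩ then 0 else qq⁻¹)
    (fun m => fun s => if s = ⟨t, h0⟩ then m ⟨t + 1, h1⟩
      else if s = ⟨t + 1, h1⟩ then m ⟨t, h0⟩ else m s)

/-- The image `Φ_ℓ(Ů(ε)) ⊆ End(𝒱^{⊗ℓ})` of the subalgebra `Ů(ε)` of `U(ε)` generated by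
`q^h (h ∈ P^∨)` and `e_i, f_i (i ∈ I∖{0})`: it is the subalgebra generated by the images
of these generators. -/
def UimageL (n ℓ : ℕ) [NeZero n] (ε : Fin n → Bool) : Subalgebra K (Module.End K (Vl n ℓ)) :=
  Algebra.adjoin K
    ({x | ∃ h : Fin n → ℤ, x = qhOpL n ℓ ε h} ∪
     {x | ∃ i : Fin n, i ≠ 0 ∧ (x = eOpL n ℓ ε i ∨ x = fOpL n ℓ ε i)})

/-- The image `Ψ_ℓ(ℋ_ℓ(q^{-2})) ⊆ End(𝒱^{⊗ℓ})` of the Iwahori–Hecke algebra: the subalgebra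
generated by the operators `Ψ_ℓ(h_i)`. -/
def HimageL (n ℓ : ℕ) [NeZero n] (ε : Fin n → Bool) : Subalgebra K (Module.End K (Vl n ℓ)) :=
  Algebra.adjoin K {x | ∃ t : Fin (ℓ - 1), x = Rsite n ℓ ε t}

/-! ### The fundamental-type modules `W_{s,ε}(x)` and their tensor products, concretely.

`W_{s,ε}(x)` is modeled inside the ambient coefficient space `WA n = (Fin n → ℕ) → K` as the
span `Wspan n ε s` of the basis vectors `|m⟩ = Pi.single m 1` for `m ∈ ℤ_+^n(ε)` with
`|m| = s`.  The generators act by the explicit formulas of Section 4.1 of Kwon–Yu. -/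

/-- A linear endomorphism of a coefficient space given by two shift terms. -/
def shift2 {M : Type} (c₁ c₂ : M → K) (σ₁ σ₂ : M → M) : Module.End K (M → K) where
  toFun g := fun m => c₁ m * g (σ₁ m) + c₂ m * g (σ₂ m)
  map_add' g h := by funext m; simp only [Pi.add_apply]; ring
  map_smul' a g := by
    funext m; simp only [Pi.smul_apply, smul_eq_mul, RingHom.id_apply]; ring

abbrev WA (n : ℕ) : Type := (Fin n → ℕ) → K

/-- `ℤ_+^n(ε)` with `|m| = s`. -/
def MsetP (n : ℕ) (ε : Fin n → Bool) (s : ℕ) : Set (Fin n → ℕ) :=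
  {m | (∀ p, ε p = true → m p ≤ 1) ∧ ∑ p, m p = s}

/-- The subspace `W_{s,ε} ⊆ WA n`. -/
def Wspan (n : ℕ) (ε : Fin n → Bool) (s : ℕ) : Submodule K (WA n) :=
  Submodule.span K {g | ∃ m ∈ MsetP n ε s, g = Pi.single m 1}

/-- `[k] = (q^k - q^{-k})/(q - q⁻¹)`. -/
def brk (k : ℕ) : K := (qq ^ (k : ℤ) - qq ^ (-(k : ℤ))) / (qq - qq⁻¹)

/-- `e_i`-coefficient, written from the *output* index `m`: the matrix entry of `e_i`
between `|m - e_i + e_{i+1}⟩` and `|m⟩`. -/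
def cE {n : ℕ} [NeZero n] (ε : Fin n → Bool) (x : K) (i : Fin n) (m : Fin n → ℕ) : K :=
  if 1 ≤ m (i - 1) ∧ (ε (i - 1) = true → m (i - 1) = 1) then
    (if i = 0 then x else 1) * qq ^ ((m i : ℤ) - (m (i - 1) : ℤ) + 1) * brk (m i + 1)
  else 0

/-- the source index of `e_i` from the output index: `m - e_i + e_{i+1}` (letterwise). -/
def σE {n : ℕ} [NeZero n] (i : Fin n) (m : Fin n → ℕ) : Fin n → ℕ :=
  Function.update (Function.update m (i - 1) (m (i - 1) - 1)) i (m i + 1)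

/-- `f_i`-coefficient from the output index `m`. -/
def cF {n : ℕ} [NeZero n] (ε : Fin n → Bool) (x : K) (i : Fin n) (m : Fin n → ℕ) : K :=
  if 1 ≤ m i ∧ (ε i = true → m i = 1) then
    (if i = 0 then x⁻¹ else 1) * qq ^ ((m (i - 1) : ℤ) - (m i : ℤ) + 1) * brk (m (i - 1) + 1)
  else 0

/-- the source index of `f_i` from the output index: `m + e_i - e_{i+1}`. -/
def σF {n : ℕ} [NeZero n] (i : Fin n) (m : Fin n → ℕ) : Fin n → ℕ :=
  Function.update (Function.update m (i - 1) (m (i - 1) + 1)) i (m i - 1)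

/-- eigenvalue of `q^h` on `|m⟩`. -/
def qhW {n : ℕ} (ε : Fin n → Bool) (h : Fin n → ℤ) (m : Fin n → ℕ) : K :=
  ∏ p : Fin n, qv ε p ^ (sgn ε p * h p * (m p : ℤ))

/-- eigenvalue of `k_i` on `|m⟩`. -/
def kW {n : ℕ} [NeZero n] (ε : Fin n → Bool) (i : Fin n) (m : Fin n → ℕ) : K :=
  qv ε (i - 1) ^ ((m (i - 1) : ℤ)) * qv ε i ^ (-(m i : ℤ))

/-- eigenvalue of `k_i⁻¹` on `|m⟩`. -/
def kinvW {n : ℕ} [NeZero n] (ε : Fin n → Bool) (i : Fin n) (m : Fin n → ℕ) : K :=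
  qv ε (i - 1) ^ (-(m (i - 1) : ℤ)) * qv ε i ^ ((m i : ℤ))

/-- the action of `e_i` on `W_{s,ε}(x)` (on the ambient space `WA n`). -/
def eWop (n : ℕ) [NeZero n] (ε : Fin n → Bool) (x : K) (i : Fin n) : Module.End K (WA n) :=
  shift2 (cE ε x i) 0 (σE i) id

/-- the action of `f_i` on `W_{s,ε}(x)`. -/
def fWop (n : ℕ) [NeZero n] (ε : Fin n → Bool) (x : K) (i : Fin n) : Module.End K (WA n) :=
  shift2 (cF ε x i) 0 (σF i) id

/-- the action of `q^h` on `W_{s,ε}(x)`. -/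
def qhWop (n : ℕ) (ε : Fin n → Bool) (h : Fin n → ℤ) : Module.End K (WA n) :=
  shift2 (qhW ε h) 0 id id

/-! #### Tensor products `W_{l,ε}(x) ⊗ W_{m,ε}(y)`, modeled on
`PW n = ((Fin n → ℕ) × (Fin n → ℕ)) → K`, with the comultiplication
`Δ(e_i) = e_i ⊗ 1 + k_i^{-1} ⊗ e_i`, `Δ(f_i) = f_i ⊗ k_i + 1 ⊗ f_i`, `Δ(q^h) = q^h ⊗ q^h`,
and the opposite comultiplication `Δ^op`. -/

abbrev PW (n : ℕ) : Type := ((Fin n → ℕ) × (Fin n → ℕ)) → K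

def PairSpan (n : ℕ) (ε : Fin n → Bool) (l m : ℕ) : Submodule K (PW n) :=
  Submodule.span K
    {g | ∃ m₁ ∈ MsetP n ε l, ∃ m₂ ∈ MsetP n ε m, g = Pi.single (m₁, m₂) 1}

/-- `Δ(e_i)` on `W_{·,ε}(x) ⊗ W_{·,ε}(y)`. -/
def ePair (n : ℕ) [NeZero n] (ε : Fin n → Bool) (x y : K) (i : Fin n) : Module.End K (PW n) :=
  shift2 (fun p => cE ε x i p.1) (fun p => kinvW ε i p.1 * cE ε y i p.2)
    (fun p => (σE i p.1, p.2)) (fun p => (p.1, σE i p.2))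

/-- `Δ(f_i)`. -/
def fPair (n : ℕ) [NeZero n] (ε : Fin n → Bool) (x y : K) (i : Fin n) : Module.End K (PW n) :=
  shift2 (fun p => cF ε x i p.1 * kW ε i p.2) (fun p => cF ε y i p.2)
    (fun p => (σF i p.1, p.2)) (fun p => (p.1, σF i p.2))

/-- `Δ(q^h)`. -/
def qhPair (n : ℕ) (ε : Fin n → Bool) (h : Fin n → ℤ) : Module.End K (PW n) :=
  shift2 (fun p => qhW ε h p.1 * qhW ε h p.2) 0 id id

/-- `Δ^op(e_i) = 1 ⊗ e_i + e_i ⊗ k_i^{-1}`. -/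
def ePairOp (n : ℕ) [NeZero n] (ε : Fin n → Bool) (x y : K) (i : Fin n) : Module.End K (PW n) :=
  shift2 (fun p => cE ε y i p.2) (fun p => cE ε x i p.1 * kinvW ε i p.2)
    (fun p => (p.1, σE i p.2)) (fun p => (σE i p.1, p.2))

/-- `Δ^op(f_i) = k_i ⊗ f_i + f_i ⊗ 1`. -/
def fPairOp (n : ℕ) [NeZero n] (ε : Fin n → Bool) (x y : K) (i : Fin n) : Module.End K (PW n) :=
  shift2 (fun p => kW ε i p.1 * cF ε y i p.2) (fun p => cF ε x i p.1)
    (fun p => (p.1, σF i p.2)) (fun p => (σF i p.1, p.2))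

/-- the flip `P(a ⊗ b) = b ⊗ a` on `PW n`. -/
def Pflip (n : ℕ) : Module.End K (PW n) where
  toFun g := fun p => g (p.2, p.1)
  map_add' g h := by funext m; simp
  map_smul' a g := by funext m; simp

/-- the basis vector `|s e_{p+1}⟩` (all boxes at the letter position `p`). -/
def unitM (n : ℕ) (s : ℕ) (p : Fin n) : Fin n → ℕ := fun r => if r = p then s else 0

/-- number of `0`s in `ε`. -/
def Mcount {n : ℕ} (ε : Fin n → Bool) : ℕ := (Finset.univ.filter fun p => ε p = false).card
/-- number of `1`s in `ε`. -/
def Ncount {n : ℕ} (ε : Fin n → Bool) : ℕ := (Finset.univ.filter fun p => ε p = true).card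

/-- the one-row partition `(s)` is an `(M|N)`-hook partition. -/
def hookRow {n : ℕ} (ε : Fin n → Bool) (s : ℕ) : Prop :=
  Mcount ε = 0 → s ≤ Ncount ε

/-! #### Folded operators: the action of the elements `K_j, E_j, F_j ∈ U(ε)`
(Theorem 4.3) on a `U(ε)`-module whose generator actions are given. -/

/-- the action of `E_j = φ(e'_j)` given the actions `Eop i` of the `e_i`. -/
def foldCombE {V : Type} [AddCommGroup V] [Module K V] {n' : ℕ} [NeZero n']
    (ε : Fin (n' + 1) → Bool) (Eop : Fin (n' + 1) → Module.End K V) (p : Fin (n' + 1))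
    (j : Fin n') : Module.End K V :=
  if (p : ℕ) = 0 then
    (if (j : ℕ) = 0 then Eop 0 * Eop 1 - Dc ε 0 1 • (Eop 1 * Eop 0) else Eop j.succ)
  else if (p : ℕ) = n' then
    (if (j : ℕ) = 0 then
        Eop (Fin.last n') * Eop 0 - Dc ε (Fin.last n') 0 • (Eop 0 * Eop (Fin.last n'))
      else Eop j.castSucc)
  else
    (if (j : ℕ) < (p : ℕ) then Eop j.castSucc
     else if (j : ℕ) = (p : ℕ) then
        Eop j.castSucc * Eop j.succ - Dc ε j.castSucc j.succ • (Eop j.succ * Eop j.castSucc)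
     else Eop j.succ)

/-- the action of `F_j = φ(f'_j)` given the actions `Fop i` of the `f_i`. -/
def foldCombF {V : Type} [AddCommGroup V] [Module K V] {n' : ℕ} [NeZero n']
    (ε : Fin (n' + 1) → Bool) (Fop : Fin (n' + 1) → Module.End K V) (p : Fin (n' + 1))
    (j : Fin n') : Module.End K V :=
  if (p : ℕ) = 0 then
    (if (j : ℕ) = 0 then Fop 1 * Fop 0 - (Dc ε 0 1)⁻¹ • (Fop 0 * Fop 1) else Fop j.succ)
  else if (p : ℕ) = n' then
    (if (j : ℕ) = 0 then
        Fop 0 * Fop (Fin.last n') - (Dc ε (Fin.last n') 0)⁻¹ • (Fop (Fin.last n') * Fop 0)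
      else Fop j.castSucc)
  else
    (if (j : ℕ) < (p : ℕ) then Fop j.castSucc
     else if (j : ℕ) = (p : ℕ) then
        Fop j.succ * Fop j.castSucc -
          (Dc ε j.castSucc j.succ)⁻¹ • (Fop j.castSucc * Fop j.succ)
     else Fop j.succ)

/-- the action of `K_j = φ(k'_j)` given the actions `Kop i` of the `k_i` (for `K_j⁻¹`,
apply to the actions of the `k_i⁻¹`). -/
def foldCombK {V : Type} [AddCommGroup V] [Module K V] {n' : ℕ} [NeZero n']
    (Kop : Fin (n' + 1) → Module.End K V) (p : Fin (n' + 1)) (j : Fin n') :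
    Module.End K V :=
  if (p : ℕ) = 0 then
    (if (j : ℕ) = 0 then Kop 0 * Kop 1 else Kop j.succ)
  else if (p : ℕ) = n' then
    (if (j : ℕ) = 0 then Kop (Fin.last n') * Kop 0 else Kop j.castSucc)
  else
    (if (j : ℕ) < (p : ℕ) then Kop j.castSucc
     else if (j : ℕ) = (p : ℕ) then Kop j.castSucc * Kop j.succ
     else Kop j.succ)

/-! #### The natural module `𝒱` (single site) and operators acting in one tensor slot. -/

/-- `e_i` on `𝒱`: `e_i v_j = δ_{i,j-1} v_{j-1}` (0-based positions: `i ↤ i-1`). -/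
def eNat (n : ℕ) [NeZero n] (i : Fin n) : Module.End K (Fin n → K) :=
  shift2 (fun p => if p = i - 1 then (1 : K) else 0) 0 (fun _ => i) id

/-- `f_i` on `𝒱`: `f_i v_j = δ_{ij} v_{j+1}`. -/
def fNat (n : ℕ) [NeZero n] (i : Fin n) : Module.End K (Fin n → K) :=
  shift2 (fun p => if p = i then (1 : K) else 0) 0 (fun _ => i - 1) id

/-- `k_i` on `𝒱` (diagonal). -/
def kNat (n : ℕ) [NeZero n] (ε : Fin n → Bool) (i : Fin n) : Module.End K (Fin n → K) :=
  shift2 (kEntry ε i) 0 id id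

/-- `k_i⁻¹` on `𝒱` (diagonal). -/
def kinvNat (n : ℕ) [NeZero n] (ε : Fin n → Bool) (i : Fin n) : Module.End K (Fin n → K) :=
  shift2 (kinvEntry ε i) 0 id id

/-- an endomorphism of `𝒱` acting in the `t`-th tensor slot of `𝒱^{⊗r}`. -/
def slotOp {n r : ℕ} (A : Module.End K (Fin n → K)) (t : Fin r) : Module.End K (Vl n r) where
  toFun g := fun μ => A (fun c => g (Function.update μ t c)) (μ t)
  map_add' g h := by
    funext μ
    show A ((fun c => g (Function.update μ t c)) + fun c => h (Function.update μ t c)) (μ t) = _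
    rw [map_add]; rfl
  map_smul' a g := by
    funext μ
    show A (a • fun c => g (Function.update μ t c)) (μ t) = _
    rw [map_smul]; rfl

/-- the `ℓ`-fold action of `k_i` on `𝒱^{⊗ℓ}` (diagonal). -/
def kOpL (n ℓ : ℕ) [NeZero n] (ε : Fin n → Bool) (i : Fin n) : Module.End K (Vl n ℓ) :=
  qhOpL n ℓ ε (κe ε i)

/-- the `ℓ`-fold action of `k_i⁻¹` on `𝒱^{⊗ℓ}` (diagonal). -/
def kinvOpL (n ℓ : ℕ) [NeZero n] (ε : Fin n → Bool) (i : Fin n) : Module.End K (Vl n ℓ) :=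
  qhOpL n ℓ ε (-κe ε i)

/-- the truncation condition: coefficient functions vanishing on multi-indices using the
deleted letter position `p` (i.e. weights `μ` with `(μ|δ_p) ≠ 0`). -/
def truncSub (n ℓ : ℕ) (p : Fin n) : Submodule K (Vl n ℓ) where
  carrier := {g | ∀ μ, (∃ t, μ t = p) → g μ = 0}
  add_mem' := by
    intro a b ha hb μ hμ
    simp only [Pi.add_apply, ha μ hμ, hb μ hμ, add_zero]
  zero_mem' := by intro μ hμ; rfl
  smul_mem' := by
    intro c a ha μ hμ
    simp only [Pi.smul_apply, ha μ hμ, smul_zero]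

/-- the product (concatenation) map realizing `𝒱^{⊗ℓ₁} ⊗ 𝒱^{⊗ℓ₂} = 𝒱^{⊗(ℓ₁+ℓ₂)}`. -/
def concatFn {n ℓ₁ ℓ₂ : ℕ} (g : Vl n ℓ₁) (h : Vl n ℓ₂) : Vl n (ℓ₁ + ℓ₂) :=
  fun μ => g (fun t => μ (Fin.castAdd ℓ₂ t)) * h (fun t => μ (Fin.natAdd ℓ₁ t))

/-- the tensor product `V ⊗ W ⊆ 𝒱^{⊗(ℓ₁+ℓ₂)}` of submodules `V ⊆ 𝒱^{⊗ℓ₁}`, `W ⊆ 𝒱^{⊗ℓ₂}`. -/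
def tensSpan {n ℓ₁ ℓ₂ : ℕ} (V : Submodule K (Vl n ℓ₁)) (W : Submodule K (Vl n ℓ₂)) :
    Submodule K (Vl n (ℓ₁ + ℓ₂)) :=
  Submodule.span K {x | ∃ g ∈ V, ∃ h ∈ W, x = concatFn g h}

set_option linter.unusedSectionVars false

section Helpers
variable {N : ℕ} [NeZero N] {ℓ ℓ₁ ℓ₂ : ℕ}

lemma eOpL_apply (ε : Fin N → Bool) (i : Fin N) (g : Vl N ℓ) (μ : Fin ℓ → Fin N) :
    eOpL N ℓ ε i g μ = ∑ t : Fin ℓ, (if μ t = i - 1 then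
      (∏ s ∈ Finset.univ.filter (fun s => s < t), kinvEntry ε i (μ s)) *
        g (Function.update μ t i) else 0) := by
  simp only [eOpL, LinearMap.sum_apply, Finset.sum_apply, twoTerm, LinearMap.coe_mk,
    AddHom.coe_mk, Pi.zero_apply, zero_mul, zero_add, ite_mul]

lemma fOpL_apply (ε : Fin N → Bool) (i : Fin N) (g : Vl N ℓ) (μ : Fin ℓ → Fin N) :
    fOpL N ℓ ε i g μ = ∑ t : Fin ℓ, (if μ t = i then
      (∏ s ∈ Finset.univ.filter (fun s => t < s), kEntry ε i (μ s)) *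
        g (Function.update μ t (i - 1)) else 0) := by
  simp only [fOpL, LinearMap.sum_apply, Finset.sum_apply, twoTerm, LinearMap.coe_mk,
    AddHom.coe_mk, Pi.zero_apply, zero_mul, zero_add, ite_mul]

lemma qhOpL_apply (ε : Fin N → Bool) (h : Fin N → ℤ) (g : Vl N ℓ) (μ : Fin ℓ → Fin N) :
    qhOpL N ℓ ε h g μ = (∏ t : Fin ℓ, qhEntry ε h (μ t)) * g μ := by
  simp only [qhOpL, twoTerm, LinearMap.coe_mk, AddHom.coe_mk, Pi.zero_apply, zero_mul,
    add_zero, id]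

lemma mem_truncSub {p : Fin N} {g : Vl N ℓ} :
    g ∈ truncSub N ℓ p ↔ ∀ μ, (∃ t, μ t = p) → g μ = 0 := Iff.rfl

lemma fin_sub_one_ne {m : ℕ} [NeZero m] (hm : 2 ≤ m) (x : Fin m) : x - 1 ≠ x := by
  intro h
  have h1 : (1 : Fin m) = 0 := sub_eq_self.mp h
  have h2 := congrArg Fin.val h1
  rw [Fin.val_one', Nat.mod_eq_of_lt hm] at h2
  simp at h2

lemma e_trunc {ε : Fin N → Bool} {p i : Fin N} (hi : i - 1 ≠ p) {g : Vl N ℓ}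
    (hg : g ∈ truncSub N ℓ p) : eOpL N ℓ ε i g ∈ truncSub N ℓ p := by
  rintro μ ⟨s, hs⟩
  rw [eOpL_apply]
  refine Finset.sum_eq_zero fun t _ => ?_
  split_ifs with h
  · have hts : t ≠ s := fun hts => hi (by rw [← h, hts, hs])
    rw [hg _ ⟨s, by rw [Function.update_of_ne (Ne.symm hts)]; exact hs⟩, mul_zero]
  · rfl

lemma f_trunc {ε : Fin N → Bool} {p i : Fin N} (hi : i ≠ p) {g : Vl N ℓ}
    (hg : g ∈ truncSub N ℓ p) : fOpL N ℓ ε i g ∈ truncSub N ℓ p := by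
  rintro μ ⟨s, hs⟩
  rw [fOpL_apply]
  refine Finset.sum_eq_zero fun t _ => ?_
  split_ifs with h
  · have hts : t ≠ s := fun hts => hi (by rw [← h, hts, hs])
    rw [hg _ ⟨s, by rw [Function.update_of_ne (Ne.symm hts)]; exact hs⟩, mul_zero]
  · rfl

lemma qh_trunc {ε : Fin N → Bool} {p : Fin N} (h : Fin N → ℤ) {g : Vl N ℓ}
    (hg : g ∈ truncSub N ℓ p) : qhOpL N ℓ ε h g ∈ truncSub N ℓ p := by
  intro μ hμ
  rw [qhOpL_apply, hg _ hμ, mul_zero]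

lemma e_kill {ε : Fin N → Bool} {p i : Fin N} (hi : i = p) {g : Vl N ℓ}
    (hg : g ∈ truncSub N ℓ p) : eOpL N ℓ ε i g = 0 := by
  funext μ
  rw [eOpL_apply]
  refine Finset.sum_eq_zero fun t _ => ?_
  split_ifs with h
  · rw [hg _ ⟨t, by rw [Function.update_self]; exact hi⟩, mul_zero]
  · rfl

lemma f_kill {ε : Fin N → Bool} {p i : Fin N} (hi : i - 1 = p) {g : Vl N ℓ}
    (hg : g ∈ truncSub N ℓ p) : fOpL N ℓ ε i g = 0 := by
  funext μ
  rw [fOpL_apply]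
  refine Finset.sum_eq_zero fun t _ => ?_
  split_ifs with h
  · rw [hg _ ⟨t, by rw [Function.update_self]; exact hi⟩, mul_zero]
  · rfl

lemma ee_trunc (hN : 2 ≤ N) {ε : Fin N → Bool} {p i₁ i₂ : Fin N} (h1 : i₁ = p)
    (h2 : i₂ - 1 = p) {g : Vl N ℓ} (hg : g ∈ truncSub N ℓ p) :
    eOpL N ℓ ε i₁ (eOpL N ℓ ε i₂ g) ∈ truncSub N ℓ p := by
  rintro μ ⟨s, hs⟩
  rw [eOpL_apply]
  refine Finset.sum_eq_zero fun t _ => ?_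
  split_ifs with h
  · have hts : t ≠ s := by
      intro hts; rw [hts, hs] at h
      exact fin_sub_one_ne hN p (by rw [← h1] at h ⊢; exact h.symm)
    set ν := Function.update μ t i₁ with hν
    have hνs : ν s = p := by rw [hν, Function.update_of_ne (Ne.symm hts)]; exact hs
    have hνt : ν t = p := by rw [hν, Function.update_self]; exact h1
    rw [eOpL_apply]
    rw [Finset.sum_eq_zero, mul_zero]
    intro t' _
    split_ifs with h'
    · by_cases htt : t' = t
      · rw [hg _ ⟨s, by rw [Function.update_of_ne (by rw [htt]; exact Ne.symm hts)]; exact hνs⟩,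
          mul_zero]
      · rw [hg _ ⟨t, by rw [Function.update_of_ne (Ne.symm htt)]; exact hνt⟩, mul_zero]
    · rfl
  · rfl

lemma ff_trunc (hN : 2 ≤ N) {ε : Fin N → Bool} {p i₁ i₂ : Fin N} (h1 : i₁ = p)
    (h2 : i₂ - 1 = p) {g : Vl N ℓ} (hg : g ∈ truncSub N ℓ p) :
    fOpL N ℓ ε i₂ (fOpL N ℓ ε i₁ g) ∈ truncSub N ℓ p := by
  rintro μ ⟨s, hs⟩
  rw [fOpL_apply]
  refine Finset.sum_eq_zero fun t _ => ?_
  split_ifs with h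
  · have hts : t ≠ s := by
      intro hts; rw [hts, hs] at h
      refine fin_sub_one_ne hN p ?_
      rw [h, h2]; exact h
    set ν := Function.update μ t (i₂ - 1) with hν
    have hνs : ν s = p := by rw [hν, Function.update_of_ne (Ne.symm hts)]; exact hs
    have hνt : ν t = p := by rw [hν, Function.update_self]; exact h2
    rw [fOpL_apply]
    rw [Finset.sum_eq_zero, mul_zero]
    intro t' _
    split_ifs with h'
    · by_cases htt : t' = t
      · rw [hg _ ⟨s, by rw [Function.update_of_ne (by rw [htt]; exact Ne.symm hts)]; exact hνs⟩,
          mul_zero]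
      · rw [hg _ ⟨t, by rw [Function.update_of_ne (Ne.symm htt)]; exact hνt⟩, mul_zero]
    · rfl
  · rfl

lemma qq_ne_zero : qq ≠ 0 := RatFunc.X_ne_zero

lemma qv_ne_zero (ε : Fin N → Bool) (p : Fin N) : qv ε p ≠ 0 := by
  unfold qv; split_ifs
  · exact neg_ne_zero.mpr (inv_ne_zero qq_ne_zero)
  · exact qq_ne_zero

lemma sgn_mul_self (ε : Fin N → Bool) (p : Fin N) : sgn ε p * sgn ε p = 1 := by
  unfold sgn; split_ifs <;> norm_num

lemma qhEntry_kinv (hN : 2 ≤ N) (ε : Fin N → Bool) (i : Fin N) (r : Fin N) :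
    qhEntry ε (-(κe ε i)) r = kinvEntry ε i r := by
  have hne : i - 1 ≠ i := fin_sub_one_ne hN i
  unfold qhEntry kinvEntry κe ωexp
  simp only [Pi.neg_apply, Pi.sub_apply]
  by_cases h1 : r = i - 1
  · have h2 : ¬ r = i := by rw [h1]; exact hne
    rw [if_pos h1, if_neg h2, if_pos h1, if_neg h2, sub_zero, mul_one, h1, mul_neg,
      sgn_mul_self, zpow_neg, zpow_one]
  · by_cases h2 : r = i
    · rw [if_neg h1, if_pos h2, if_neg h1, if_pos h2, zero_sub, neg_neg, h2,
        sgn_mul_self, zpow_one, one_mul]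
    · rw [if_neg h1, if_neg h2, if_neg h1, if_neg h2, sub_zero, neg_zero, mul_zero,
        zpow_zero, one_mul]

lemma qhEntry_k (hN : 2 ≤ N) (ε : Fin N → Bool) (i : Fin N) (r : Fin N) :
    qhEntry ε (κe ε i) r = kEntry ε i r := by
  have hne : i - 1 ≠ i := fin_sub_one_ne hN i
  unfold qhEntry kEntry κe ωexp
  simp only [Pi.sub_apply]
  by_cases h1 : r = i - 1
  · have h2 : ¬ r = i := by rw [h1]; exact hne
    rw [if_pos h1, if_neg h2, if_pos h1, if_neg h2, sub_zero, mul_one, h1,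
      sgn_mul_self, zpow_one]
  · by_cases h2 : r = i
    · rw [if_neg h1, if_pos h2, if_neg h1, if_pos h2, zero_sub, mul_neg, h2,
        sgn_mul_self, zpow_neg, zpow_one, one_mul]
    · rw [if_neg h1, if_neg h2, if_neg h1, if_neg h2, sub_zero, mul_zero,
        zpow_zero, one_mul]

lemma kinvOpL_apply (hN : 2 ≤ N) (ε : Fin N → Bool) (i : Fin N) (g : Vl N ℓ)
    (μ : Fin ℓ → Fin N) :
    kinvOpL N ℓ ε i g μ = (∏ t : Fin ℓ, kinvEntry ε i (μ t)) * g μ := by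
  rw [kinvOpL, qhOpL_apply]
  congr 1
  exact Finset.prod_congr rfl fun t _ => qhEntry_kinv hN ε i (μ t)

lemma kOpL_apply (hN : 2 ≤ N) (ε : Fin N → Bool) (i : Fin N) (g : Vl N ℓ)
    (μ : Fin ℓ → Fin N) :
    kOpL N ℓ ε i g μ = (∏ t : Fin ℓ, kEntry ε i (μ t)) * g μ := by
  rw [kOpL, qhOpL_apply]
  congr 1
  exact Finset.prod_congr rfl fun t _ => qhEntry_k hN ε i (μ t)

-- concat linearity
lemma concat_add_left (g g' : Vl N ℓ₁) (h : Vl N ℓ₂) :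
    concatFn (g + g') h = concatFn g h + concatFn g' h := by
  funext μ; simp only [concatFn, Pi.add_apply]; ring

lemma concat_add_right (g : Vl N ℓ₁) (h h' : Vl N ℓ₂) :
    concatFn g (h + h') = concatFn g h + concatFn g h' := by
  funext μ; simp only [concatFn, Pi.add_apply]; ring

lemma concat_smul_left (c : K) (g : Vl N ℓ₁) (h : Vl N ℓ₂) :
    concatFn (c • g) h = c • concatFn g h := by
  funext μ; simp only [concatFn, Pi.smul_apply, smul_eq_mul]; ring

lemma concat_smul_right (c : K) (g : Vl N ℓ₁) (h : Vl N ℓ₂) :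
    concatFn g (c • h) = c • concatFn g h := by
  funext μ; simp only [concatFn, Pi.smul_apply, smul_eq_mul]; ring

lemma concat_zero_left (h : Vl N ℓ₂) : concatFn (0 : Vl N ℓ₁) h = 0 := by
  funext μ; simp [concatFn]

lemma concat_zero_right (g : Vl N ℓ₁) : concatFn g (0 : Vl N ℓ₂) = 0 := by
  funext μ; simp [concatFn]

lemma concat_sub_left (g g' : Vl N ℓ₁) (h : Vl N ℓ₂) :
    concatFn (g - g') h = concatFn g h - concatFn g' h := by
  funext μ; simp only [concatFn, Pi.sub_apply]; ring

lemma concat_sub_right (g : Vl N ℓ₁) (h h' : Vl N ℓ₂) :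
    concatFn g (h - h') = concatFn g h - concatFn g h' := by
  funext μ; simp only [concatFn, Pi.sub_apply]; ring

-- update/restriction lemmas
lemma cast_ne_nat (a : Fin ℓ₁) (b : Fin ℓ₂) :
    (Fin.castAdd ℓ₂ a : Fin (ℓ₁ + ℓ₂)) ≠ Fin.natAdd ℓ₁ b := by
  rw [Fin.ne_iff_vne, Fin.coe_castAdd, Fin.coe_natAdd]
  have := a.isLt; omega

lemma upd_cast_cast (μ : Fin (ℓ₁ + ℓ₂) → Fin N) (a : Fin ℓ₁) (c : Fin N) :
    (fun t => Function.update μ (Fin.castAdd ℓ₂ a) c (Fin.castAdd ℓ₂ t)) =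
      Function.update (fun t => μ (Fin.castAdd ℓ₂ t)) a c := by
  funext t
  rcases eq_or_ne t a with rfl | hne
  · rw [Function.update_self, Function.update_self]
  · rw [Function.update_of_ne (fun hc => hne (Fin.castAdd_injective _ _ hc)),
      Function.update_of_ne hne]

lemma upd_cast_nat (μ : Fin (ℓ₁ + ℓ₂) → Fin N) (a : Fin ℓ₁) (c : Fin N) :
    (fun t => Function.update μ (Fin.castAdd ℓ₂ a) c (Fin.natAdd ℓ₁ t)) =
      (fun t => μ (Fin.natAdd ℓ₁ t)) := by
  funext t
  rw [Function.update_of_ne (Ne.symm (cast_ne_nat a t))]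

lemma upd_nat_cast (μ : Fin (ℓ₁ + ℓ₂) → Fin N) (b : Fin ℓ₂) (c : Fin N) :
    (fun t => Function.update μ (Fin.natAdd ℓ₁ b) c (Fin.castAdd ℓ₂ t)) =
      (fun t => μ (Fin.castAdd ℓ₂ t)) := by
  funext t
  rw [Function.update_of_ne (cast_ne_nat t b)]

lemma upd_nat_nat (μ : Fin (ℓ₁ + ℓ₂) → Fin N) (b : Fin ℓ₂) (c : Fin N) :
    (fun t => Function.update μ (Fin.natAdd ℓ₁ b) c (Fin.natAdd ℓ₁ t)) =
      Function.update (fun t => μ (Fin.natAdd ℓ₁ t)) b c := by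
  funext t
  rcases eq_or_ne t b with rfl | hne
  · rw [Function.update_self, Function.update_self]
  · rw [Function.update_of_ne (fun hc => hne (by
      rw [Fin.ext_iff, Fin.coe_natAdd, Fin.coe_natAdd] at hc
      exact Fin.ext (by omega))), Function.update_of_ne hne]

lemma concat_apply (g : Vl N ℓ₁) (h : Vl N ℓ₂) (μ : Fin (ℓ₁ + ℓ₂) → Fin N) :
    concatFn g h μ = g (fun t => μ (Fin.castAdd ℓ₂ t)) * h (fun t => μ (Fin.natAdd ℓ₁ t)) := rfl

lemma lt_cast_iff {ℓ₁ ℓ₂ : ℕ} (s a : Fin ℓ₁) :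
    (Fin.castAdd ℓ₂ s : Fin (ℓ₁ + ℓ₂)) < Fin.castAdd ℓ₂ a ↔ s < a := by
  rw [Fin.lt_def, Fin.lt_def, Fin.coe_castAdd, Fin.coe_castAdd]

lemma lt_nat_iff {ℓ₁ ℓ₂ : ℕ} (s b : Fin ℓ₂) :
    (Fin.natAdd ℓ₁ s : Fin (ℓ₁ + ℓ₂)) < Fin.natAdd ℓ₁ b ↔ s < b := by
  rw [Fin.lt_def, Fin.lt_def, Fin.coe_natAdd, Fin.coe_natAdd]
  omega

lemma prodsplit_cast (φ : Fin (ℓ₁ + ℓ₂) → K) (a : Fin ℓ₁) :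
    ∏ s ∈ Finset.univ.filter (fun s => s < Fin.castAdd ℓ₂ a), φ s
      = ∏ s ∈ Finset.univ.filter (fun s => s < a), φ (Fin.castAdd ℓ₂ s) := by
  rw [Finset.prod_filter, Finset.prod_filter, Fin.prod_univ_add]
  have h2 : (∏ s : Fin ℓ₂, if Fin.natAdd ℓ₁ s < Fin.castAdd ℓ₂ a then φ (Fin.natAdd ℓ₁ s) else 1) = 1 := by
    apply Finset.prod_eq_one; intro s _
    rw [if_neg]
    rw [Fin.lt_def, Fin.coe_natAdd, Fin.coe_castAdd]
    have := a.isLt; omega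
  rw [h2, mul_one]
  exact Finset.prod_congr rfl fun s _ => if_congr (lt_cast_iff s a) rfl rfl

lemma prodsplit_nat (φ : Fin (ℓ₁ + ℓ₂) → K) (b : Fin ℓ₂) :
    ∏ s ∈ Finset.univ.filter (fun s => s < Fin.natAdd ℓ₁ b), φ s
      = (∏ s : Fin ℓ₁, φ (Fin.castAdd ℓ₂ s)) *
        ∏ s ∈ Finset.univ.filter (fun s => s < b), φ (Fin.natAdd ℓ₁ s) := by
  rw [Finset.prod_filter, Finset.prod_filter, Fin.prod_univ_add]
  congr 1
  · apply Finset.prod_congr rfl; intro s _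
    rw [if_pos]
    rw [Fin.lt_def, Fin.coe_natAdd, Fin.coe_castAdd]
    have := s.isLt; omega
  · exact Finset.prod_congr rfl fun s _ => if_congr (lt_nat_iff s b) rfl rfl

lemma prodsplit_cast_gt (φ : Fin (ℓ₁ + ℓ₂) → K) (a : Fin ℓ₁) :
    ∏ s ∈ Finset.univ.filter (fun s => Fin.castAdd ℓ₂ a < s), φ s
      = (∏ s ∈ Finset.univ.filter (fun s => a < s), φ (Fin.castAdd ℓ₂ s)) *
        ∏ s : Fin ℓ₂, φ (Fin.natAdd ℓ₁ s) := by
  rw [Finset.prod_filter, Finset.prod_filter, Fin.prod_univ_add]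
  refine congrArg₂ (· * ·) ?_ ?_
  · exact Finset.prod_congr rfl fun s _ => if_congr (lt_cast_iff a s) rfl rfl
  · apply Finset.prod_congr rfl; intro s _
    rw [if_pos]
    rw [Fin.lt_def, Fin.coe_natAdd, Fin.coe_castAdd]
    have := a.isLt; omega

lemma prodsplit_nat_gt (φ : Fin (ℓ₁ + ℓ₂) → K) (b : Fin ℓ₂) :
    ∏ s ∈ Finset.univ.filter (fun s => Fin.natAdd ℓ₁ b < s), φ s
      = ∏ s ∈ Finset.univ.filter (fun s => b < s), φ (Fin.natAdd ℓ₁ s) := by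
  rw [Finset.prod_filter, Finset.prod_filter, Fin.prod_univ_add]
  have h2 : (∏ s : Fin ℓ₁, if Fin.natAdd ℓ₁ b < Fin.castAdd ℓ₂ s then φ (Fin.castAdd ℓ₂ s) else 1) = 1 := by
    apply Finset.prod_eq_one; intro s _
    rw [if_neg]
    rw [Fin.lt_def, Fin.coe_natAdd, Fin.coe_castAdd]
    have := s.isLt; omega
  rw [h2, one_mul]
  exact Finset.prod_congr rfl fun s _ => if_congr (lt_nat_iff b s) rfl rfl

lemma eConcat (hN : 2 ≤ N) (ε : Fin N → Bool) (i : Fin N) (g : Vl N ℓ₁) (h : Vl N ℓ₂) :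
    eOpL N (ℓ₁ + ℓ₂) ε i (concatFn g h) =
      concatFn (eOpL N ℓ₁ ε i g) h + concatFn (kinvOpL N ℓ₁ ε i g) (eOpL N ℓ₂ ε i h) := by
  funext μ
  rw [Pi.add_apply, eOpL_apply, Fin.sum_univ_add]
  congr 1
  · rw [concat_apply, eOpL_apply, Finset.sum_mul]
    apply Finset.sum_congr rfl
    intro a _
    beta_reduce
    rw [ite_mul, zero_mul]
    by_cases hc : μ (Fin.castAdd ℓ₂ a) = i - 1
    · rw [if_pos hc, if_pos hc, concat_apply, upd_cast_cast, upd_cast_nat, prodsplit_cast]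
      ring
    · rw [if_neg hc, if_neg hc]
  · rw [concat_apply, kinvOpL_apply hN, eOpL_apply, Finset.mul_sum]
    apply Finset.sum_congr rfl
    intro b _
    beta_reduce
    by_cases hc : μ (Fin.natAdd ℓ₁ b) = i - 1
    · rw [if_pos hc, if_pos hc, concat_apply, upd_nat_cast, upd_nat_nat, prodsplit_nat]
      ring
    · rw [if_neg hc, if_neg hc, mul_zero]

lemma fConcat (hN : 2 ≤ N) (ε : Fin N → Bool) (i : Fin N) (g : Vl N ℓ₁) (h : Vl N ℓ₂) :
    fOpL N (ℓ₁ + ℓ₂) ε i (concatFn g h) =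
      concatFn (fOpL N ℓ₁ ε i g) (kOpL N ℓ₂ ε i h) + concatFn g (fOpL N ℓ₂ ε i h) := by
  funext μ
  rw [Pi.add_apply, fOpL_apply, Fin.sum_univ_add]
  congr 1
  · rw [concat_apply, fOpL_apply, kOpL_apply hN, Finset.sum_mul]
    apply Finset.sum_congr rfl
    intro a _
    beta_reduce
    rw [ite_mul, zero_mul]
    by_cases hc : μ (Fin.castAdd ℓ₂ a) = i
    · rw [if_pos hc, if_pos hc, concat_apply, upd_cast_cast, upd_cast_nat, prodsplit_cast_gt]
      ring
    · rw [if_neg hc, if_neg hc]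
  · rw [concat_apply, fOpL_apply, Finset.mul_sum]
    apply Finset.sum_congr rfl
    intro b _
    beta_reduce
    by_cases hc : μ (Fin.natAdd ℓ₁ b) = i
    · rw [if_pos hc, if_pos hc, concat_apply, upd_nat_cast, upd_nat_nat, prodsplit_nat_gt]
      ring
    · rw [if_neg hc, if_neg hc, mul_zero]

lemma qhConcat (ε : Fin N → Bool) (hh : Fin N → ℤ) (g : Vl N ℓ₁) (h : Vl N ℓ₂) :
    qhOpL N (ℓ₁ + ℓ₂) ε hh (concatFn g h) =
      concatFn (qhOpL N ℓ₁ ε hh g) (qhOpL N ℓ₂ ε hh h) := by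
  funext μ
  simp only [qhOpL_apply, concat_apply]
  rw [Fin.prod_univ_add]; ring

def cntP {N ℓ : ℕ} (p : Fin N) (μ : Fin ℓ → Fin N) : ℕ :=
  (Finset.univ.filter fun t => μ t = p).card

lemma cntP_le (p : Fin N) (μ : Fin ℓ → Fin N) : cntP p μ ≤ ℓ := by
  have := Finset.card_filter_le (Finset.univ : Finset (Fin ℓ)) (fun t => μ t = p)
  simpa [cntP] using this

lemma cntP_eq_zero_iff (p : Fin N) (μ : Fin ℓ → Fin N) :
    cntP p μ = 0 ↔ ∀ t, μ t ≠ p := by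
  simp [cntP, Finset.card_eq_zero, Finset.filter_eq_empty_iff]

def hsel {N : ℕ} (ε : Fin N → Bool) (p : Fin N) : Fin N → ℤ :=
  fun r => if r = p then sgn ε p else 0

lemma qh_hsel_apply (ε : Fin N → Bool) (p : Fin N) (g : Vl N ℓ) (μ : Fin ℓ → Fin N) :
    qhOpL N ℓ ε (hsel ε p) g μ = (qv ε p) ^ (cntP p μ) * g μ := by
  rw [qhOpL_apply]
  congr 1
  have h1 : ∀ t : Fin ℓ, qhEntry ε (hsel ε p) (μ t) = if μ t = p then qv ε p else 1 := by
    intro t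
    unfold qhEntry hsel
    by_cases h : μ t = p
    · rw [if_pos h, if_pos h, h, sgn_mul_self, zpow_one]
    · rw [if_neg h, if_neg h, mul_zero, zpow_zero]
  rw [Finset.prod_congr rfl (fun t _ => h1 t), Finset.prod_ite, Finset.prod_const,
    Finset.prod_const_one, mul_one]
  rfl

lemma qv_pow_ne_one (ε : Fin N → Bool) (p : Fin N) (k : ℕ) : (qv ε p) ^ (k + 1) ≠ 1 := by
  have key : ∀ r : ℚ, qq ^ (k + 1) ≠ algebraMap (Polynomial ℚ) K (Polynomial.C r) := by
    intro r hr
    have h1 : algebraMap (Polynomial ℚ) K (Polynomial.X ^ (k + 1)) =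
        algebraMap (Polynomial ℚ) K (Polynomial.C r) := by
      rw [map_pow, RatFunc.algebraMap_X]; exact hr
    have h2 := RatFunc.algebraMap_injective ℚ h1
    have h3 := congrArg Polynomial.natDegree h2
    rw [Polynomial.natDegree_X_pow, Polynomial.natDegree_C] at h3
    omega
  intro hc
  unfold qv at hc
  split_ifs at hc with hε
  · have h2 : ((-1 : K)) ^ (k + 1) * (qq ^ (k + 1))⁻¹ = 1 := by
      rw [← inv_pow, ← mul_pow]; simpa using hc
    have h3 : ((-1 : K)) ^ (k + 1) = qq ^ (k + 1) :=
      (mul_inv_eq_one₀ (pow_ne_zero _ qq_ne_zero)).mp h2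
    refine key ((-1 : ℚ) ^ (k + 1)) ?_
    rw [← h3]
    rw [map_pow, Polynomial.C_neg, Polynomial.C_1, map_pow, map_neg, map_one]
  · refine key 1 ?_
    rw [hc, Polynomial.C_1, map_one]

def lagOp (ε : Fin N → Bool) (p : Fin N) (ℓ : ℕ) : ℕ → Module.End K (Vl N ℓ)
  | 0 => 1
  | m + 1 => lagOp ε p ℓ m *
      (((qv ε p) ^ (m + 1) - 1)⁻¹ •
        ((qv ε p) ^ (m + 1) • (1 : Module.End K (Vl N ℓ)) - qhOpL N ℓ ε (hsel ε p)))

lemma lagOp_apply (ε : Fin N → Bool) (p : Fin N) (m : ℕ) (g : Vl N ℓ) (μ : Fin ℓ → Fin N) :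
    lagOp ε p ℓ m g μ =
      (∏ k ∈ Finset.range m,
        ((qv ε p) ^ (k + 1) - 1)⁻¹ * ((qv ε p) ^ (k + 1) - (qv ε p) ^ (cntP p μ))) * g μ := by
  induction m generalizing g with
  | zero => simp [lagOp]
  | succ m ih =>
    simp only [lagOp, Module.End.mul_apply]
    rw [ih]
    simp only [LinearMap.smul_apply, LinearMap.sub_apply, Module.End.one_apply,
      Pi.smul_apply, Pi.sub_apply, smul_eq_mul]
    rw [qh_hsel_apply, Finset.prod_range_succ]
    ring

lemma lagOp_mem (ε : Fin N → Bool) (p : Fin N) (M : Submodule K (Vl N ℓ))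
    (hM : ∀ hh : Fin N → ℤ, ∀ g ∈ M, qhOpL N ℓ ε hh g ∈ M) (m : ℕ) (g : Vl N ℓ)
    (hg : g ∈ M) : lagOp ε p ℓ m g ∈ M := by
  induction m generalizing g with
  | zero => simpa [lagOp] using hg
  | succ m ih =>
    simp only [lagOp, Module.End.mul_apply]
    refine ih _ ?_
    simp only [LinearMap.smul_apply, LinearMap.sub_apply, Module.End.one_apply]
    exact Submodule.smul_mem _ _ (Submodule.sub_mem _ (Submodule.smul_mem _ _ hg)
      (hM _ _ hg))

def truncProj {N : ℕ} (p : Fin N) {ℓ : ℕ} (g : Vl N ℓ) : Vl N ℓ :=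
  fun μ => if ∀ t, μ t ≠ p then g μ else 0

lemma truncProj_eq_lag (ε : Fin N → Bool) (p : Fin N) (g : Vl N ℓ) :
    truncProj p g = lagOp ε p ℓ ℓ g := by
  funext μ
  rw [lagOp_apply, truncProj]
  by_cases h : ∀ t, μ t ≠ p
  · have h0 : cntP p μ = 0 := (cntP_eq_zero_iff p μ).mpr h
    rw [if_pos h, h0]
    rw [Finset.prod_congr rfl (fun k _ => by
      rw [pow_zero, inv_mul_cancel₀ (sub_ne_zero.mpr (qv_pow_ne_one ε p k))]),
      Finset.prod_const_one, one_mul]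
  · rw [if_neg h]
    have h0 : cntP p μ ≠ 0 := fun hc => h ((cntP_eq_zero_iff p μ).mp hc)
    obtain ⟨m, hm⟩ : ∃ m, cntP p μ = m + 1 := ⟨cntP p μ - 1, by omega⟩
    have hmem : m ∈ Finset.range ℓ := by
      rw [Finset.mem_range]
      have := cntP_le p μ; omega
    rw [Finset.prod_eq_zero hmem (by rw [hm, sub_self, mul_zero]), zero_mul]

lemma truncProj_mem (ε : Fin N → Bool) (p : Fin N) (M : Submodule K (Vl N ℓ))
    (hM : ∀ hh : Fin N → ℤ, ∀ g ∈ M, qhOpL N ℓ ε hh g ∈ M) (g : Vl N ℓ) (hg : g ∈ M) :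
    truncProj p g ∈ M := by
  rw [truncProj_eq_lag ε]
  exact lagOp_mem ε p M hM ℓ g hg

lemma truncProj_in_trunc (p : Fin N) (g : Vl N ℓ) : truncProj p g ∈ truncSub N ℓ p := by
  rintro μ ⟨t, ht⟩
  rw [truncProj, if_neg (fun hall => hall t ht)]

lemma truncProj_eq_self {p : Fin N} {g : Vl N ℓ} (hg : g ∈ truncSub N ℓ p) :
    truncProj p g = g := by
  funext μ
  rw [truncProj]
  by_cases h : ∀ t, μ t ≠ p
  · rw [if_pos h]
  · rw [if_neg h]
    push_neg at h
    exact (hg μ h).symm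

lemma forall_fin_add {P : Fin (ℓ₁ + ℓ₂) → Prop} :
    (∀ t, P t) ↔ (∀ a : Fin ℓ₁, P (Fin.castAdd ℓ₂ a)) ∧ (∀ b : Fin ℓ₂, P (Fin.natAdd ℓ₁ b)) :=
  ⟨fun h => ⟨fun a => h _, fun b => h _⟩, fun h t => Fin.addCases h.1 h.2 t⟩

lemma truncProj_concat (p : Fin N) (g : Vl N ℓ₁) (h : Vl N ℓ₂) :
    truncProj p (concatFn g h) = concatFn (truncProj p g) (truncProj p h) := by
  funext μ
  rw [concat_apply, truncProj, truncProj, truncProj, concat_apply]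
  by_cases h1 : ∀ a : Fin ℓ₁, μ (Fin.castAdd ℓ₂ a) ≠ p
  · by_cases h2 : ∀ b : Fin ℓ₂, μ (Fin.natAdd ℓ₁ b) ≠ p
    · rw [if_pos h1, if_pos h2, if_pos (forall_fin_add.mpr ⟨h1, h2⟩)]
    · rw [if_neg h2, if_neg (fun hall => h2 (forall_fin_add.mp hall).2), mul_zero]
  · rw [if_neg h1, if_neg (fun hall => h1 (forall_fin_add.mp hall).1), zero_mul]

lemma truncProj_add (p : Fin N) (g g' : Vl N ℓ) :
    truncProj p (g + g') = truncProj p g + truncProj p g' := by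
  funext μ; rw [Pi.add_apply, truncProj, truncProj, truncProj, Pi.add_apply]
  split_ifs <;> simp

lemma truncProj_smul (p : Fin N) (c : K) (g : Vl N ℓ) :
    truncProj p (c • g) = c • truncProj p g := by
  funext μ; rw [Pi.smul_apply, truncProj, truncProj, Pi.smul_apply]
  split_ifs <;> simp

lemma truncProj_zero (p : Fin N) : truncProj p (0 : Vl N ℓ) = 0 := by
  funext μ; rw [truncProj]; split_ifs <;> rfl
end Helpers

section Fold
variable {n' : ℕ} [NeZero n']

lemma fold_dichotomy (ε : Fin (n' + 1) → Bool) (p : Fin (n' + 1)) (j : Fin n') (hj : j ≠ 0) :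
    (∃ i : Fin (n' + 1), i ≠ 0 ∧ i ≠ p ∧ i ≠ p + 1 ∧
      ∀ (V' : Type) [AddCommGroup V'] [Module K V']
        (e f k k' : Fin (n' + 1) → Module.End K V'),
        foldCombE ε e p j = e i ∧ foldCombF ε f p j = f i ∧ foldCombK k p j = k i ∧
          foldCombK k' p j = k' i) ∨
    (∃ i₁ i₂ : Fin (n' + 1), i₁ ≠ 0 ∧ i₂ ≠ 0 ∧ i₁ = p ∧ i₂ = p + 1 ∧
      ∀ (V' : Type) [AddCommGroup V'] [Module K V']
        (e f k k' : Fin (n' + 1) → Module.End K V'),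
        foldCombE ε e p j = e i₁ * e i₂ - Dc ε i₁ i₂ • (e i₂ * e i₁) ∧
        foldCombF ε f p j = f i₂ * f i₁ - (Dc ε i₁ i₂)⁻¹ • (f i₁ * f i₂) ∧
        foldCombK k p j = k i₁ * k i₂ ∧ foldCombK k' p j = k' i₁ * k' i₂) := by
  have hn1 : 1 ≤ n' := Nat.one_le_iff_ne_zero.mpr (NeZero.ne n')
  have hn0 : n' ≠ 0 := NeZero.ne n'
  have hjv : (j : ℕ) ≠ 0 := fun h0 => hj (Fin.ext (by rw [h0]; simp))
  have hjlt : (j : ℕ) < n' := j.isLt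
  have hone : ((1 : Fin (n' + 1)) : ℕ) = 1 := by
    rw [Fin.val_one', Nat.mod_eq_of_lt (by omega)]
  by_cases hp0 : (p : ℕ) = 0
  · left
    refine ⟨j.succ, Fin.succ_ne_zero j, ?_, ?_, ?_⟩
    · rw [Fin.ne_iff_vne, Fin.val_succ]; omega
    · rw [Fin.ne_iff_vne, Fin.val_succ, Fin.val_add_one]
      split_ifs with hl
      · omega
      · omega
    · intro V' _ _ e f k k'
      refine ⟨?_, ?_, ?_, ?_⟩ <;> simp [foldCombE, foldCombF, foldCombK, hp0, hjv]
  · by_cases hpn : (p : ℕ) = n'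
    · left
      refine ⟨j.castSucc, ?_, ?_, ?_, ?_⟩
      · rw [Fin.ne_iff_vne, Fin.coe_castSucc]; simpa using hjv
      · rw [Fin.ne_iff_vne, Fin.coe_castSucc]; omega
      · rw [Fin.ne_iff_vne, Fin.coe_castSucc, Fin.val_add_one]
        split_ifs with hl
        · omega
        · rw [Fin.ext_iff, Fin.val_last] at hl; omega
      · intro V' _ _ e f k k'
        refine ⟨?_, ?_, ?_, ?_⟩ <;> simp [foldCombE, foldCombF, foldCombK, hp0, hpn, hjv, hn0]
    · have hplt : (p : ℕ) < n' := by have := p.isLt; omega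
      have hpnl : p ≠ Fin.last n' := by rw [Fin.ne_iff_vne, Fin.val_last]; omega
      have hp1 : ((p + 1 : Fin (n' + 1)) : ℕ) = (p : ℕ) + 1 := by
        rw [Fin.val_add_one, if_neg hpnl]
      by_cases hjp : (j : ℕ) < (p : ℕ)
      · left
        refine ⟨j.castSucc, ?_, ?_, ?_, ?_⟩
        · rw [Fin.ne_iff_vne, Fin.coe_castSucc]; simpa using hjv
        · rw [Fin.ne_iff_vne, Fin.coe_castSucc]; omega
        · rw [Fin.ne_iff_vne, Fin.coe_castSucc, hp1]; omega
        · intro V' _ _ e f k k'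
          refine ⟨?_, ?_, ?_, ?_⟩ <;> simp [foldCombE, foldCombF, foldCombK, hp0, hpn, hjp]
      · by_cases hje : (j : ℕ) = (p : ℕ)
        · right
          refine ⟨j.castSucc, j.succ, ?_, Fin.succ_ne_zero j, ?_, ?_, ?_⟩
          · rw [Fin.ne_iff_vne, Fin.coe_castSucc]; simpa using hjv
          · rw [Fin.ext_iff, Fin.coe_castSucc]; exact hje
          · rw [Fin.ext_iff, Fin.val_succ, hp1]; omega
          · intro V' _ _ e f k k'
            refine ⟨?_, ?_, ?_, ?_⟩ <;>
              simp [foldCombE, foldCombF, foldCombK, hp0, hpn, hjp, hje]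
        · left
          refine ⟨j.succ, Fin.succ_ne_zero j, ?_, ?_, ?_⟩
          · rw [Fin.ne_iff_vne, Fin.val_succ]; omega
          · rw [Fin.ne_iff_vne, Fin.val_succ, hp1]; omega
          · intro V' _ _ e f k k'
            refine ⟨?_, ?_, ?_, ?_⟩ <;>
              simp [foldCombE, foldCombF, foldCombK, hp0, hpn, hjp, hje]
end Fold

section Glue
variable {N : ℕ} [NeZero N] {ℓ ℓ₁ ℓ₂ : ℕ}
set_option linter.unusedSectionVars false

lemma qh_comm (ε : Fin N → Bool) (h₁ h₂ : Fin N → ℤ) (g : Vl N ℓ) :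
    qhOpL N ℓ ε h₁ (qhOpL N ℓ ε h₂ g) = qhOpL N ℓ ε h₂ (qhOpL N ℓ ε h₁ g) := by
  funext μ; simp only [qhOpL_apply]; ring

lemma kConcat (ε : Fin N → Bool) (i : Fin N) (g : Vl N ℓ₁) (h : Vl N ℓ₂) :
    kOpL N (ℓ₁ + ℓ₂) ε i (concatFn g h) =
      concatFn (kOpL N ℓ₁ ε i g) (kOpL N ℓ₂ ε i h) := qhConcat ε (κe ε i) g h

lemma kinvConcat (ε : Fin N → Bool) (i : Fin N) (g : Vl N ℓ₁) (h : Vl N ℓ₂) :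
    kinvOpL N (ℓ₁ + ℓ₂) ε i (concatFn g h) =
      concatFn (kinvOpL N ℓ₁ ε i g) (kinvOpL N ℓ₂ ε i h) := qhConcat ε (-κe ε i) g h

lemma kk_comm (ε : Fin N → Bool) (i₁ i₂ : Fin N) (g : Vl N ℓ) :
    kOpL N ℓ ε i₁ (kOpL N ℓ ε i₂ g) = kOpL N ℓ ε i₂ (kOpL N ℓ ε i₁ g) :=
  qh_comm ε (κe ε i₁) (κe ε i₂) g

lemma k_trunc {ε : Fin N → Bool} {p : Fin N} (i : Fin N) {g : Vl N ℓ}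
    (hg : g ∈ truncSub N ℓ p) : kOpL N ℓ ε i g ∈ truncSub N ℓ p := qh_trunc _ hg

lemma kinv_trunc {ε : Fin N → Bool} {p : Fin N} (i : Fin N) {g : Vl N ℓ}
    (hg : g ∈ truncSub N ℓ p) : kinvOpL N ℓ ε i g ∈ truncSub N ℓ p := qh_trunc _ hg

lemma concat_in_trunc {p : Fin N} {g : Vl N ℓ₁} {h : Vl N ℓ₂}
    (hg : g ∈ truncSub N ℓ₁ p) (hh : h ∈ truncSub N ℓ₂ p) :
    concatFn g h ∈ truncSub N (ℓ₁ + ℓ₂) p := by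
  rintro μ ⟨t, ht⟩
  rw [concat_apply]
  rcases lt_or_ge (t : ℕ) ℓ₁ with hlt | hge
  · have h1 : Fin.castAdd ℓ₂ ⟨(t : ℕ), hlt⟩ = t := Fin.ext rfl
    rw [hg _ ⟨⟨(t : ℕ), hlt⟩, by rw [h1]; exact ht⟩, zero_mul]
  · have hb : (t : ℕ) - ℓ₁ < ℓ₂ := by have := t.isLt; omega
    have h1 : Fin.natAdd ℓ₁ ⟨(t : ℕ) - ℓ₁, hb⟩ = t := Fin.ext (by simp; omega)
    rw [hh _ ⟨⟨(t : ℕ) - ℓ₁, hb⟩, by rw [h1]; exact ht⟩, mul_zero]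

lemma tens_op (V : Submodule K (Vl N ℓ₁)) (W : Submodule K (Vl N ℓ₂))
    (O : Module.End K (Vl N (ℓ₁ + ℓ₂)))
    (hO : ∀ g ∈ V, ∀ h ∈ W, O (concatFn g h) ∈ tensSpan V W) :
    ∀ x ∈ tensSpan V W, O x ∈ tensSpan V W := by
  intro x hx
  induction hx using Submodule.span_induction with
  | mem x hx =>
    obtain ⟨g, hg, h, hh, rfl⟩ := hx
    exact hO g hg h hh
  | zero => rw [map_zero]; exact Submodule.zero_mem _
  | add x y hx hy ihx ihy => rw [map_add]; exact Submodule.add_mem _ ihx ihy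
  | smul c x hx ihx => rw [map_smul]; exact Submodule.smul_mem _ _ ihx
end Glue

section MainLemmas
variable {n' : ℕ} [NeZero n']
set_option linter.unusedSectionVars false

lemma fold_stable (ε : Fin (n' + 1) → Bool) (p : Fin (n' + 1)) (ℓ : ℕ)
    (M : Submodule K (Vl (n' + 1) ℓ))
    (hMe : ∀ i : Fin (n' + 1), i ≠ 0 → ∀ g ∈ M,
      eOpL (n' + 1) ℓ ε i g ∈ M ∧ fOpL (n' + 1) ℓ ε i g ∈ M)
    (hMq : ∀ h : Fin (n' + 1) → ℤ, ∀ g ∈ M, qhOpL (n' + 1) ℓ ε h g ∈ M) :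
    ∀ j : Fin n', j ≠ 0 → ∀ g ∈ M ⊓ truncSub (n' + 1) ℓ p,
      foldCombE ε (eOpL (n' + 1) ℓ ε) p j g ∈ M ⊓ truncSub (n' + 1) ℓ p ∧
      foldCombF ε (fOpL (n' + 1) ℓ ε) p j g ∈ M ⊓ truncSub (n' + 1) ℓ p ∧
      foldCombK (kOpL (n' + 1) ℓ ε) p j g ∈ M ⊓ truncSub (n' + 1) ℓ p := by
  have hN2 : 2 ≤ n' + 1 := by have := NeZero.ne n'; omega
  intro j hj g hg
  obtain ⟨hgM, hgT⟩ := hg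
  rcases fold_dichotomy ε p j hj with ⟨i, hi0, hip, hip1, hEq⟩ |
    ⟨i₁, i₂, h10, h20, h1p, h2p, hEq⟩
  · obtain ⟨hE, hF, hK, -⟩ := hEq (Vl (n' + 1) ℓ)
      (eOpL (n' + 1) ℓ ε) (fOpL (n' + 1) ℓ ε) (kOpL (n' + 1) ℓ ε) (kOpL (n' + 1) ℓ ε)
    rw [hE, hF, hK]
    have him1 : i - 1 ≠ p := fun hc => hip1 (by rwa [sub_eq_iff_eq_add] at hc)
    exact ⟨⟨(hMe i hi0 g hgM).1, e_trunc him1 hgT⟩,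
      ⟨(hMe i hi0 g hgM).2, f_trunc hip hgT⟩,
      ⟨hMq (κe ε i) g hgM, k_trunc i hgT⟩⟩
  · obtain ⟨hE, hF, hK, -⟩ := hEq (Vl (n' + 1) ℓ)
      (eOpL (n' + 1) ℓ ε) (fOpL (n' + 1) ℓ ε) (kOpL (n' + 1) ℓ ε) (kOpL (n' + 1) ℓ ε)
    rw [hE, hF, hK]
    have h2m1 : i₂ - 1 = p := by rw [h2p]; abel
    refine ⟨?_, ?_, ?_⟩
    · simp only [LinearMap.sub_apply, LinearMap.smul_apply, Module.End.mul_apply]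
      rw [e_kill h1p hgT, map_zero, smul_zero, sub_zero]
      exact ⟨(hMe i₁ h10 _ ((hMe i₂ h20 g hgM).1)).1, ee_trunc hN2 h1p h2m1 hgT⟩
    · simp only [LinearMap.sub_apply, LinearMap.smul_apply, Module.End.mul_apply]
      rw [f_kill h2m1 hgT, map_zero, smul_zero, sub_zero]
      exact ⟨(hMe i₂ h20 _ ((hMe i₁ h10 g hgM).2)).2, ff_trunc hN2 h1p h2m1 hgT⟩
    · simp only [Module.End.mul_apply]
      exact ⟨hMq (κe ε i₁) _ (hMq (κe ε i₂) g hgM), k_trunc i₁ (k_trunc i₂ hgT)⟩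
end MainLemmas

/-- **Corollary 4.6 (Kwon–Yu)**: let `ε'` be obtained from `ε` by deleting the entry at
position `p`, and let `V ⊆ 𝒱^{⊗ℓ₁}`, `W ⊆ 𝒱^{⊗ℓ₂}` be `Ů(ε)`-submodules.  Then
(1) `tr^ε_{ε'}(V)`, `tr^ε_{ε'}(W)` and `tr^ε_{ε'}(V ⊗ W)` are `Ů(ε')`-modules via the
folding homomorphism `φ` (i.e. stable under the operators `E_j, F_j, K_j`, `j ≠ 0`), and
(2) `tr^ε_{ε'}(V ⊗ W) ≅ tr^ε_{ε'}(V) ⊗ tr^ε_{ε'}(W)` as `Ů(ε')`-modules: the two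
subspaces of `𝒱^{⊗(ℓ₁+ℓ₂)}` coincide, and the `Ů(ε')`-action on the left is the tensor
product action (via the comultiplication) of the actions on the two truncated factors. -/
theorem truncation_of_tensor_product (n' : ℕ) [NeZero n'] (hn : 4 ≤ n' + 1)
    (ε : Fin (n' + 1) → Bool) (p : Fin (n' + 1)) (ε' : Fin n' → Bool)
    (hε' : ∀ j : Fin n', ε' j = ε (if (j : ℕ) < (p : ℕ) then j.castSucc else j.succ))
    (hhom : n' + 1 = 4 → ∀ j j' : Fin n', ε' j = ε' j')
    (ℓ₁ ℓ₂ : ℕ) (V : Submodule K (Vl (n' + 1) ℓ₁)) (W : Submodule K (Vl (n' + 1) ℓ₂))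
    (hV : ∀ i : Fin (n' + 1), i ≠ 0 → ∀ g ∈ V,
      eOpL (n' + 1) ℓ₁ ε i g ∈ V ∧ fOpL (n' + 1) ℓ₁ ε i g ∈ V)
    (hVh : ∀ h : Fin (n' + 1) → ℤ, ∀ g ∈ V, qhOpL (n' + 1) ℓ₁ ε h g ∈ V)
    (hW : ∀ i : Fin (n' + 1), i ≠ 0 → ∀ g ∈ W,
      eOpL (n' + 1) ℓ₂ ε i g ∈ W ∧ fOpL (n' + 1) ℓ₂ ε i g ∈ W)
    (hWh : ∀ h : Fin (n' + 1) → ℤ, ∀ g ∈ W, qhOpL (n' + 1) ℓ₂ ε h g ∈ W) :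
    -- (1) stability of the truncations under `E_j, F_j, K_j` (`j ≠ 0`)
    (∀ j : Fin n', j ≠ 0 → ∀ g ∈ V ⊓ truncSub (n' + 1) ℓ₁ p,
      foldCombE ε (eOpL (n' + 1) ℓ₁ ε) p j g ∈ V ⊓ truncSub (n' + 1) ℓ₁ p ∧
      foldCombF ε (fOpL (n' + 1) ℓ₁ ε) p j g ∈ V ⊓ truncSub (n' + 1) ℓ₁ p ∧
      foldCombK (kOpL (n' + 1) ℓ₁ ε) p j g ∈ V ⊓ truncSub (n' + 1) ℓ₁ p) ∧
    (∀ j : Fin n', j ≠ 0 → ∀ g ∈ W ⊓ truncSub (n' + 1) ℓ₂ p,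
      foldCombE ε (eOpL (n' + 1) ℓ₂ ε) p j g ∈ W ⊓ truncSub (n' + 1) ℓ₂ p ∧
      foldCombF ε (fOpL (n' + 1) ℓ₂ ε) p j g ∈ W ⊓ truncSub (n' + 1) ℓ₂ p ∧
      foldCombK (kOpL (n' + 1) ℓ₂ ε) p j g ∈ W ⊓ truncSub (n' + 1) ℓ₂ p) ∧
    (∀ j : Fin n', j ≠ 0 → ∀ g ∈ tensSpan V W ⊓ truncSub (n' + 1) (ℓ₁ + ℓ₂) p,
      foldCombE ε (eOpL (n' + 1) (ℓ₁ + ℓ₂) ε) p j g ∈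
        tensSpan V W ⊓ truncSub (n' + 1) (ℓ₁ + ℓ₂) p ∧
      foldCombF ε (fOpL (n' + 1) (ℓ₁ + ℓ₂) ε) p j g ∈
        tensSpan V W ⊓ truncSub (n' + 1) (ℓ₁ + ℓ₂) p ∧
      foldCombK (kOpL (n' + 1) (ℓ₁ + ℓ₂) ε) p j g ∈
        tensSpan V W ⊓ truncSub (n' + 1) (ℓ₁ + ℓ₂) p) ∧
    -- (2) `tr^ε_{ε'}(V ⊗ W) = tr^ε_{ε'}(V) ⊗ tr^ε_{ε'}(W)` ...
    (tensSpan V W ⊓ truncSub (n' + 1) (ℓ₁ + ℓ₂) p =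
      tensSpan (V ⊓ truncSub (n' + 1) ℓ₁ p) (W ⊓ truncSub (n' + 1) ℓ₂ p)) ∧
    -- ... compatibly with the `Ů(ε')`-actions (tensor product rule via `Δ`)
    (∀ j : Fin n', j ≠ 0 → ∀ g ∈ V ⊓ truncSub (n' + 1) ℓ₁ p,
      ∀ h ∈ W ⊓ truncSub (n' + 1) ℓ₂ p,
      foldCombE ε (eOpL (n' + 1) (ℓ₁ + ℓ₂) ε) p j (concatFn g h) =
        concatFn (foldCombE ε (eOpL (n' + 1) ℓ₁ ε) p j g) h +
          concatFn (foldCombK (kinvOpL (n' + 1) ℓ₁ ε) p j g)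
            (foldCombE ε (eOpL (n' + 1) ℓ₂ ε) p j h) ∧
      foldCombF ε (fOpL (n' + 1) (ℓ₁ + ℓ₂) ε) p j (concatFn g h) =
        concatFn (foldCombF ε (fOpL (n' + 1) ℓ₁ ε) p j g)
            (foldCombK (kOpL (n' + 1) ℓ₂ ε) p j h) +
          concatFn g (foldCombF ε (fOpL (n' + 1) ℓ₂ ε) p j h) ∧
      foldCombK (kOpL (n' + 1) (ℓ₁ + ℓ₂) ε) p j (concatFn g h) =
        concatFn (foldCombK (kOpL (n' + 1) ℓ₁ ε) p j g)
          (foldCombK (kOpL (n' + 1) ℓ₂ ε) p j h)) := by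
  have hN2 : 2 ≤ n' + 1 := by omega
  have tensE : ∀ i : Fin (n' + 1), i ≠ 0 → ∀ x ∈ tensSpan V W,
      eOpL (n' + 1) (ℓ₁ + ℓ₂) ε i x ∈ tensSpan V W := by
    intro i hi
    refine tens_op V W _ ?_
    intro g hg h hh
    rw [eConcat hN2]
    exact Submodule.add_mem _
      (Submodule.subset_span ⟨_, (hV i hi g hg).1, _, hh, rfl⟩)
      (Submodule.subset_span ⟨_, hVh (-(κe ε i)) g hg, _, (hW i hi h hh).1, rfl⟩)
  have tensF : ∀ i : Fin (n' + 1), i ≠ 0 → ∀ x ∈ tensSpan V W,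
      fOpL (n' + 1) (ℓ₁ + ℓ₂) ε i x ∈ tensSpan V W := by
    intro i hi
    refine tens_op V W _ ?_
    intro g hg h hh
    rw [fConcat hN2]
    exact Submodule.add_mem _
      (Submodule.subset_span ⟨_, (hV i hi g hg).2, _, hWh (κe ε i) h hh, rfl⟩)
      (Submodule.subset_span ⟨_, hg, _, (hW i hi h hh).2, rfl⟩)
  have tensQ : ∀ hh : Fin (n' + 1) → ℤ, ∀ x ∈ tensSpan V W,
      qhOpL (n' + 1) (ℓ₁ + ℓ₂) ε hh x ∈ tensSpan V W := by
    intro hq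
    refine tens_op V W _ ?_
    intro g hg h hh
    rw [qhConcat]
    exact Submodule.subset_span ⟨_, hVh hq g hg, _, hWh hq h hh, rfl⟩
  refine ⟨fold_stable ε p ℓ₁ V hV hVh, fold_stable ε p ℓ₂ W hW hWh,
    fold_stable ε p (ℓ₁ + ℓ₂) (tensSpan V W)
      (fun i hi x hx => ⟨tensE i hi x hx, tensF i hi x hx⟩) tensQ, ?_, ?_⟩
  · -- the equality of submodules
    apply le_antisymm
    · rintro x ⟨hx, hxT⟩
      have hxe : truncProj p x = x := truncProj_eq_self hxT
      rw [← hxe]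
      clear hxe hxT
      induction hx using Submodule.span_induction with
      | mem x hx =>
        obtain ⟨g, hg, h, hh, rfl⟩ := hx
        rw [truncProj_concat]
        exact Submodule.subset_span ⟨_, ⟨truncProj_mem ε p V hVh g hg, truncProj_in_trunc p g⟩,
          _, ⟨truncProj_mem ε p W hWh h hh, truncProj_in_trunc p h⟩, rfl⟩
      | zero => rw [truncProj_zero]; exact Submodule.zero_mem _
      | add a b ha hb iha ihb => rw [truncProj_add]; exact Submodule.add_mem _ iha ihb
      | smul c a ha iha => rw [truncProj_smul]; exact Submodule.smul_mem _ _ iha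
    · rw [le_inf_iff]
      constructor
      · refine Submodule.span_le.mpr ?_
        rintro x ⟨g, hg, h, hh, rfl⟩
        exact Submodule.subset_span ⟨g, hg.1, h, hh.1, rfl⟩
      · refine Submodule.span_le.mpr ?_
        rintro x ⟨g, hg, h, hh, rfl⟩
        exact concat_in_trunc hg.2 hh.2
  · -- compatibility with the tensor-product action
    rintro j hj g ⟨hgV, hgT⟩ h ⟨hhW, hhT⟩
    rcases fold_dichotomy ε p j hj with ⟨i, hi0, hip, hip1, hEq⟩ |
      ⟨i₁, i₂, h10, h20, h1p, h2p, hEq⟩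
    · obtain ⟨hEb, hFb, hKb, -⟩ := hEq (Vl (n' + 1) (ℓ₁ + ℓ₂)) (eOpL (n' + 1) (ℓ₁ + ℓ₂) ε)
        (fOpL (n' + 1) (ℓ₁ + ℓ₂) ε) (kOpL (n' + 1) (ℓ₁ + ℓ₂) ε) (kOpL (n' + 1) (ℓ₁ + ℓ₂) ε)
      obtain ⟨hE1, hF1, hK1, hKi1⟩ := hEq (Vl (n' + 1) ℓ₁) (eOpL (n' + 1) ℓ₁ ε)
        (fOpL (n' + 1) ℓ₁ ε) (kOpL (n' + 1) ℓ₁ ε) (kinvOpL (n' + 1) ℓ₁ ε)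
      obtain ⟨hE2, hF2, hK2, -⟩ := hEq (Vl (n' + 1) ℓ₂) (eOpL (n' + 1) ℓ₂ ε)
        (fOpL (n' + 1) ℓ₂ ε) (kOpL (n' + 1) ℓ₂ ε) (kOpL (n' + 1) ℓ₂ ε)
      refine ⟨?_, ?_, ?_⟩
      · rw [hEb, hE1, hKi1, hE2]; exact eConcat hN2 ε i g h
      · rw [hFb, hF1, hK2, hF2]; exact fConcat hN2 ε i g h
      · rw [hKb, hK1, hK2]; exact kConcat ε i g h
    · obtain ⟨hEb, hFb, hKb, -⟩ := hEq (Vl (n' + 1) (ℓ₁ + ℓ₂)) (eOpL (n' + 1) (ℓ₁ + ℓ₂) ε)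
        (fOpL (n' + 1) (ℓ₁ + ℓ₂) ε) (kOpL (n' + 1) (ℓ₁ + ℓ₂) ε) (kOpL (n' + 1) (ℓ₁ + ℓ₂) ε)
      obtain ⟨hE1, hF1, hK1, hKi1⟩ := hEq (Vl (n' + 1) ℓ₁) (eOpL (n' + 1) ℓ₁ ε)
        (fOpL (n' + 1) ℓ₁ ε) (kOpL (n' + 1) ℓ₁ ε) (kinvOpL (n' + 1) ℓ₁ ε)
      obtain ⟨hE2, hF2, hK2, -⟩ := hEq (Vl (n' + 1) ℓ₂) (eOpL (n' + 1) ℓ₂ ε)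
        (fOpL (n' + 1) ℓ₂ ε) (kOpL (n' + 1) ℓ₂ ε) (kOpL (n' + 1) ℓ₂ ε)
      have h2m1 : i₂ - 1 = p := by rw [h2p]; abel
      refine ⟨?_, ?_, ?_⟩
      · rw [hEb, hE1, hKi1, hE2]
        simp only [LinearMap.sub_apply, LinearMap.smul_apply, Module.End.mul_apply]
        have heg : eOpL (n' + 1) ℓ₁ ε i₁ g = 0 := e_kill h1p hgT
        have heh : eOpL (n' + 1) ℓ₂ ε i₁ h = 0 := e_kill h1p hhT
        have hek : eOpL (n' + 1) ℓ₁ ε i₁ (kinvOpL (n' + 1) ℓ₁ ε i₂ g) = 0 :=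
          e_kill h1p (kinv_trunc i₂ hgT)
        simp only [eConcat hN2, heg, heh, hek, map_add, map_zero, smul_zero, sub_zero,
          concat_zero_left, concat_zero_right, add_zero, zero_add]
      · rw [hFb, hF1, hK2, hF2]
        simp only [LinearMap.sub_apply, LinearMap.smul_apply, Module.End.mul_apply]
        have hfg : fOpL (n' + 1) ℓ₁ ε i₂ g = 0 := f_kill h2m1 hgT
        have hfh : fOpL (n' + 1) ℓ₂ ε i₂ h = 0 := f_kill h2m1 hhT
        have hfk : fOpL (n' + 1) ℓ₂ ε i₂ (kOpL (n' + 1) ℓ₂ ε i₁ h) = 0 :=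
          f_kill h2m1 (k_trunc i₁ hhT)
        simp only [fConcat hN2, hfg, hfh, hfk, map_add, map_zero, smul_zero, sub_zero,
          concat_zero_left, concat_zero_right, add_zero, zero_add]
        rw [kk_comm ε i₂ i₁ h]
      · rw [hKb, hK1, hK2]
        simp only [Module.End.mul_apply]
        rw [kConcat ε i₂ g h, kConcat ε i₁]
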